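/- Assume the standing hypothesis: Γ is a finite simple connected k-regular graph with k ≥ 3, G ≤ Aut(Γ), α a vertex with local girth λ(Γ,α) ≥ 2s+2 (s ≥ 1), G_α transitive on Γ_s(α), and Δ a G_α-orbit in Γ_{s+1}(α). With Γ(α)={β_1,…,β_k}, X={1,…,k}, B_j = Γ_s(α) ∩ Γ_{s−1}(β_j), Δ_j = Δ ∩ Γ_s(β_j), Δ(S) = ∩_{j∈S} Δ_j, B_j(S) = ∪_{δ∈Δ(S)} (B_j ∩ Γ(δ)), c_s' = |Γ(δ)∩Γ_s(α)|, b_s' = |Γ(γ)∩Δ|, 𝓑(c_s') = {S ⊆ X : |S| = c_s', Δ(S) ≠ ∅}, and 𝓑(c_s',j) = {S ∈ 𝓑(c_s') : j ∈ S}: if b_s' = 1, then for every j ∈ X and every S ∈ 𝓑(c_s',j): (i) the edges of Γ between B_j and Δ_j form a perfect matching between B_j and Δ_j; (ii) the edges between B_j(S) and Δ(S) form a perfect matching between them; (iii) {B_j(S) : S ∈ 𝓑(c_s',j)} is a partition of B_j; and (iv) {Δ(S) : S ∈ 𝓑(c_s',j)} is a partition of Δ_j. -/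

import Mathlib

open SimpleGraph

namespace MyAux

variable {V : Type*} {Γ : SimpleGraph V}

/-- Along any walk, find the first vertex satisfying `Q` (the endpoint satisfies it),
together with the prefix walk up to it. -/
lemma exists_first_prefix {a x : V} (r : Γ.Walk a x) (Q : V → Prop) (hx : Q x) :
    ∃ (w : V) (t : Γ.Walk a w), Q w ∧ t.length ≤ r.length ∧ t.support ⊆ r.support ∧
      (∀ z ∈ t.support, Q z → z = w) ∧ (r.IsPath → t.IsPath) := by
  revert hx
  induction r with
  | nil =>
      intro hx
      refine ⟨_, Walk.nil, hx, le_rfl, fun z hz => hz, ?_, fun _ => Walk.IsPath.nil⟩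
      intro z hz _
      simpa using hz
  | @cons a b x h r' ih =>
      intro hx
      by_cases hQ : Q a
      · refine ⟨a, Walk.nil, hQ, by simp, ?_, ?_, fun _ => Walk.IsPath.nil⟩
        · intro z hz
          simp only [Walk.support_nil, List.mem_singleton] at hz
          subst hz
          exact Walk.start_mem_support _
        · intro z hz _
          simpa using hz
      · obtain ⟨w, t', hw, hlen, hsub, hfirst, hpath⟩ := ih hx
        refine ⟨w, Walk.cons h t', hw, ?_, ?_, ?_, ?_⟩
        · simpa using Nat.add_le_add_right hlen 1
        · simp only [Walk.support_cons]
          exact List.cons_subset_cons a hsub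
        · intro z hz hQz
          simp only [Walk.support_cons, List.mem_cons] at hz
          rcases hz with rfl | hz
          · exact absurd hQz hQ
          · exact hfirst z hz hQz
        · intro hp
          rw [Walk.cons_isPath_iff] at hp ⊢
          exact ⟨hpath hp.1, fun hc => hp.2 (hsub hc)⟩

/-- Two paths from `a` to `x` through distinct neighbours `b₁ ≠ b₂` of `a` yield a cycle
through `a` of length at most the sum of the lengths. -/
lemma cycle_of_two_paths {a x b₁ b₂ : V}
    (h₁ : Γ.Adj a b₁) (h₂ : Γ.Adj a b₂) (hne : b₁ ≠ b₂)
    (p₁ : Γ.Walk b₁ x) (q₁ : Γ.Walk b₂ x)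
    (hp : (Walk.cons h₁ p₁).IsPath) (hq : (Walk.cons h₂ q₁).IsPath) :
    ∃ c : Γ.Walk a a, c.IsCycle ∧ c.length ≤ p₁.length + q₁.length + 2 := by
  classical
  obtain ⟨w, t, hwq, hlen, hsub, hfirst, htpath'⟩ :=
    exists_first_prefix p₁ (· ∈ (Walk.cons h₂ q₁).support) (Walk.end_mem_support _)
  have hp₁ : p₁.IsPath := ((Walk.cons_isPath_iff _ _).mp hp).1
  have hanp : a ∉ p₁.support := ((Walk.cons_isPath_iff _ _).mp hp).2
  have hanq : a ∉ q₁.support := ((Walk.cons_isPath_iff _ _).mp hq).2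
  have htpath : t.IsPath := htpath' hp₁
  set q : Γ.Walk a x := Walk.cons h₂ q₁ with hqdef
  set u : Γ.Walk a w := q.takeUntil w hwq with hudef
  have hu : u.IsPath := hq.takeUntil hwq
  have hulen : u.length ≤ q.length := Walk.length_takeUntil_le q hwq
  have husubq : u.support ⊆ q.support := Walk.support_takeUntil_subset q hwq
  have hurev : u.reverse.IsPath := hu.reverse
  -- support of u.reverse starts with w
  have hrs : u.reverse.support = w :: u.reverse.support.tail := Walk.support_eq_cons _
  have hwnotail : w ∉ u.reverse.support.tail := by
    have := hurev.support_nodup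
    rw [hrs] at this
    exact (List.nodup_cons.mp this).1
  have htailnodup : u.reverse.support.tail.Nodup := by
    have := hurev.support_nodup
    exact this.sublist (List.tail_sublist _)
  have hdisj : ∀ z ∈ t.support, z ∉ u.reverse.support.tail := by
    intro z hz hz'
    have hz'' : z ∈ u.support := by
      have : z ∈ u.reverse.support := (List.tail_sublist _).subset hz'
      rwa [Walk.support_reverse, List.mem_reverse] at this
    have := hfirst z hz (husubq hz'')
    subst this
    exact hwnotail hz'
  have happ : (t.append u.reverse).IsPath := by
    rw [Walk.isPath_def, Walk.support_append, List.nodup_append]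
    exact ⟨htpath.support_nodup, htailnodup, fun z hz y hy hzy => by subst hzy; exact hdisj z hz hy⟩
  have hedge : s(a, b₁) ∉ (t.append u.reverse).edges := by
    rw [Walk.edges_append]
    intro hmem
    rcases List.mem_append.mp hmem with hmem | hmem
    · exact hanp (hsub (Walk.fst_mem_support_of_mem_edges t hmem))
    · rw [Walk.edges_reverse, List.mem_reverse] at hmem
      have hmem' : s(a, b₁) ∈ q.edges := Walk.edges_takeUntil_subset q hwq hmem
      rw [hqdef, Walk.edges_cons, List.mem_cons] at hmem'
      rcases hmem' with heq | hmem'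
      · rw [Sym2.eq_iff] at heq
        rcases heq with ⟨-, h⟩ | ⟨h, -⟩
        · exact hne h
        · exact h₂.ne h
      · exact hanq (Walk.fst_mem_support_of_mem_edges q₁ hmem')
  refine ⟨Walk.cons h₁ (t.append u.reverse), ?_, ?_⟩
  · exact (Walk.cons_isCycle_iff _ h₁).mpr ⟨happ, hedge⟩
  · have h5 : (Walk.cons h₁ (t.append u.reverse)).length
        = t.length + u.length + 1 := by
      rw [Walk.length_cons, Walk.length_append, Walk.length_reverse]
    have h6 : q.length = q₁.length + 1 := by simp [hqdef]
    omega

lemma dist_add_dist_le_length {u v z : V} (p : Γ.Walk u v) (hz : z ∈ p.support) :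
    Γ.dist u z + Γ.dist z v ≤ p.length := by
  classical
  have h1 : Γ.dist u z ≤ (p.takeUntil z hz).length := SimpleGraph.dist_le _
  have h2 : Γ.dist z v ≤ (p.dropUntil z hz).length := SimpleGraph.dist_le _
  have h3 : (p.takeUntil z hz).length + (p.dropUntil z hz).length = p.length := by
    have := congrArg Walk.length (p.take_spec hz)
    rwa [Walk.length_append] at this
  omega

lemma perm_dist_le (hconn : Γ.Connected) (g : Equiv.Perm V)
    (hg : ∀ u v : V, Γ.Adj (g u) (g v) ↔ Γ.Adj u v) (u v : V) :
    Γ.dist (g u) (g v) ≤ Γ.dist u v := by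
  obtain ⟨p, -, hlen⟩ := hconn.exists_path_of_dist u v
  let f : Γ →g Γ := ⟨g, fun {x y} h => (hg x y).mpr h⟩
  calc Γ.dist (g u) (g v) ≤ (p.map f).length := SimpleGraph.dist_le _
    _ = p.length := Walk.length_map _ _
    _ = Γ.dist u v := hlen

end MyAux

/-- `G` is a subgroup of the automorphism group of `Γ`:
every element of `G` preserves adjacency. -/
def IsAutSubgroup {V : Type*} (Γ : SimpleGraph V) (G : Subgroup (Equiv.Perm V)) : Prop :=
  ∀ g ∈ G, ∀ u v : V, Γ.Adj (g u) (g v) ↔ Γ.Adj u v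

/-- `Δ_j = Δ ∩ Γ_s(β_j)`: the part of `Δ` at distance `s` from the neighbour `b = β_j` of `α`. -/
def DeltaJ {V : Type*} (Γ : SimpleGraph V) (s : ℕ) (Δ : Set V) (b : V) : Set V :=
  Δ ∩ {v | Γ.dist b v = s}

/-- `Δ(S) = ⋂_{j ∈ S} Δ_j`. -/
def DeltaS {V : Type*} (Γ : SimpleGraph V) (s : ℕ) (Δ : Set V) {k : ℕ} (β : Fin k → V)
    (S : Finset (Fin k)) : Set V :=
  ⋂ j ∈ S, DeltaJ Γ s Δ (β j)

/-- `𝓑(c') = {S ⊆ X : |S| = c' and Δ(S) ≠ ∅}`. -/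
def Blocks {V : Type*} (Γ : SimpleGraph V) (s : ℕ) (Δ : Set V) {k : ℕ} (β : Fin k → V)
    (c' : ℕ) : Set (Finset (Fin k)) :=
  {S | S.card = c' ∧ DeltaS Γ s Δ β S ≠ ∅}

/-- `B_j = Γ_s(α) ∩ Γ_{s-1}(β_j)` where `b = β_j`. -/
def BJ {V : Type*} (Γ : SimpleGraph V) (α : V) (s : ℕ) (b : V) : Set V :=
  {v | Γ.dist α v = s} ∩ {v | Γ.dist b v = s - 1}

/-- `B_j(S) = ⋃_{δ ∈ Δ(S)} (B_j ∩ Γ(δ))`. -/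
def BJS {V : Type*} (Γ : SimpleGraph V) (α : V) (s : ℕ) (Δ : Set V) {k : ℕ} (β : Fin k → V)
    (j : Fin k) (S : Finset (Fin k)) : Set V :=
  ⋃ δ ∈ DeltaS Γ s Δ β S, BJ Γ α s (β j) ∩ Γ.neighborSet δ

theorem matchings_when_bs_eq_one {V : Type*} [Fintype V]
    (Γ : SimpleGraph V) (hconn : Γ.Connected)
    (k : ℕ) (hk : 3 ≤ k) (hreg : ∀ v : V, (Γ.neighborSet v).ncard = k)
    (G : Subgroup (Equiv.Perm V)) (hGaut : IsAutSubgroup Γ G)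
    (α : V) (s : ℕ) (hs : 1 ≤ s)
    -- local girth `λ(Γ,α) ≥ 2s+2`
    (hgα : ∀ w : Γ.Walk α α, w.IsCycle → 2 * s + 2 ≤ w.length)
    (hgβ : ∀ b : V, Γ.Adj α b → ∀ w : Γ.Walk b b, w.IsCycle → 2 * s + 1 ≤ w.length)
    -- `G_α` is transitive on `Γ_s(α)`
    (htrans : ∀ u v : V, Γ.dist α u = s → Γ.dist α v = s →
      ∃ g ∈ G, g α = α ∧ g u = v)
    -- `Δ` is a `G_α`-orbit in `Γ_{s+1}(α)`
    (Δ : Set V) (hΔsub : Δ ⊆ {v | Γ.dist α v = s + 1})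
    (hΔorb : ∃ δ₀ ∈ Δ, Δ = {v | ∃ g ∈ G, (g : Equiv.Perm V) α = α ∧ g δ₀ = v})
    -- `β` enumerates the neighbours `β_1, …, β_k` of `α`
    (β : Fin k → V) (hβinj : Function.Injective β)
    (hβran : ∀ v : V, Γ.Adj α v ↔ ∃ j : Fin k, β j = v)
    -- `c_s' = |Γ(δ) ∩ Γ_s(α)|`, independent of `δ ∈ Δ`
    (c' : ℕ) (hc' : ∀ δ ∈ Δ, (Γ.neighborSet δ ∩ {w | Γ.dist α w = s}).ncard = c')
    -- `b_s' = |Γ(γ) ∩ Δ| = 1` for every `γ ∈ Γ_s(α)`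
    (hb1 : ∀ γ : V, Γ.dist α γ = s → (Γ.neighborSet γ ∩ Δ).ncard = 1) :
    ∀ j : Fin k, ∀ S ∈ Blocks Γ s Δ β c', j ∈ S →
      -- (i) the edges between `B_j` and `Δ_j` form a perfect matching
      ((∀ γ ∈ BJ Γ α s (β j), (Γ.neighborSet γ ∩ DeltaJ Γ s Δ (β j)).ncard = 1) ∧
        (∀ δ ∈ DeltaJ Γ s Δ (β j), (Γ.neighborSet δ ∩ BJ Γ α s (β j)).ncard = 1)) ∧
      -- (ii) the edges between `B_j(S)` and `Δ(S)` form a perfect matching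
      ((∀ γ ∈ BJS Γ α s Δ β j S, (Γ.neighborSet γ ∩ DeltaS Γ s Δ β S).ncard = 1) ∧
        (∀ δ ∈ DeltaS Γ s Δ β S, (Γ.neighborSet δ ∩ BJS Γ α s Δ β j S).ncard = 1)) ∧
      -- (iii) `{B_j(T) : T ∈ 𝓑(c_s',j)}` is a partition of `B_j`
      ((⋃ T ∈ {T | T ∈ Blocks Γ s Δ β c' ∧ j ∈ T}, BJS Γ α s Δ β j T) =
          BJ Γ α s (β j) ∧
        ∀ T₁ ∈ {T | T ∈ Blocks Γ s Δ β c' ∧ j ∈ T},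
          ∀ T₂ ∈ {T | T ∈ Blocks Γ s Δ β c' ∧ j ∈ T}, T₁ ≠ T₂ →
            BJS Γ α s Δ β j T₁ ∩ BJS Γ α s Δ β j T₂ = ∅) ∧
      -- (iv) `{Δ(T) : T ∈ 𝓑(c_s',j)}` is a partition of `Δ_j`
      ((⋃ T ∈ {T | T ∈ Blocks Γ s Δ β c' ∧ j ∈ T}, DeltaS Γ s Δ β T) =
          DeltaJ Γ s Δ (β j) ∧
        ∀ T₁ ∈ {T | T ∈ Blocks Γ s Δ β c' ∧ j ∈ T},
          ∀ T₂ ∈ {T | T ∈ Blocks Γ s Δ β c' ∧ j ∈ T}, T₁ ≠ T₂ →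
            DeltaS Γ s Δ β T₁ ∩ DeltaS Γ s Δ β T₂ = ∅) := by
  classical
  intro j S hS hjS
  obtain ⟨hScard, hSne⟩ := hS
  have tri : ∀ u v w : V, Γ.dist u w ≤ Γ.dist u v + Γ.dist v w :=
    fun _ _ _ => hconn.dist_triangle
  have hadjβ : ∀ m : Fin k, Γ.Adj α (β m) := fun m => (hβran (β m)).mpr ⟨m, rfl⟩
  have hadj_le : ∀ u v : V, Γ.Adj u v → Γ.dist u v ≤ 1 := fun u v h => by
    simpa using SimpleGraph.dist_le (Walk.cons h Walk.nil)
  have hd1 : ∀ m : Fin k, Γ.dist α (β m) ≤ 1 := fun m => hadj_le _ _ (hadjβ m)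
  -- every vertex at distance s has a branch neighbour of α
  have h1 : ∀ γ : V, Γ.dist α γ = s → ∃ m : Fin k, Γ.dist (β m) γ = s - 1 := by
    intro γ hγ
    obtain ⟨p, hp, hplen⟩ := hconn.exists_path_of_dist α γ
    rw [hγ] at hplen
    cases p with
    | nil => simp at hplen; omega
    | cons h p' =>
      rename_i b
      obtain ⟨m, hm⟩ := (hβran b).mp h
      refine ⟨m, ?_⟩
      subst hm
      have hle : Γ.dist (β m) γ ≤ s - 1 := by
        have := SimpleGraph.dist_le p'
        rw [Walk.length_cons] at hplen
        omega
      have hge : s ≤ 1 + Γ.dist (β m) γ := by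
        calc s = Γ.dist α γ := hγ.symm
          _ ≤ Γ.dist α (β m) + Γ.dist (β m) γ := tri _ _ _
          _ ≤ 1 + Γ.dist (β m) γ := by have := hd1 m; omega
      omega
  -- the branch is unique (girth argument)
  have h2 : ∀ γ : V, Γ.dist α γ = s → ∀ m₁ m₂ : Fin k,
      Γ.dist (β m₁) γ = s - 1 → Γ.dist (β m₂) γ = s - 1 → m₁ = m₂ := by
    intro γ hγ m₁ m₂ hm₁ hm₂
    by_contra hne
    obtain ⟨p₁, hp₁, hp₁len⟩ := hconn.exists_path_of_dist (β m₁) γ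
    obtain ⟨q₁, hq₁, hq₁len⟩ := hconn.exists_path_of_dist (β m₂) γ
    rw [hm₁] at hp₁len
    rw [hm₂] at hq₁len
    have hnotin : ∀ (m : Fin k) (r : Γ.Walk (β m) γ), r.length = s - 1 →
        α ∉ r.support := by
      intro m r hrlen hmem
      have := MyAux.dist_add_dist_le_length r hmem
      omega
    have hp : (Walk.cons (hadjβ m₁) p₁).IsPath := hp₁.cons (hnotin _ _ hp₁len)
    have hq : (Walk.cons (hadjβ m₂) q₁).IsPath := hq₁.cons (hnotin _ _ hq₁len)
    obtain ⟨c, hc, hclen⟩ := MyAux.cycle_of_two_paths (hadjβ m₁) (hadjβ m₂)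
      (fun hb => hne (hβinj hb)) p₁ q₁ hp hq
    have := hgα c hc
    omega
  -- a Δ-neighbour of a branch vertex is at distance s from the branch
  have h3 : ∀ γ δ : V, Γ.dist α γ = s → Γ.Adj γ δ → δ ∈ Δ → ∀ m : Fin k,
      Γ.dist (β m) γ = s - 1 → Γ.dist (β m) δ = s := by
    intro γ δ hγ hadj hδ m hm
    have hδd : Γ.dist α δ = s + 1 := hΔsub hδ
    have hub : Γ.dist (β m) δ ≤ Γ.dist (β m) γ + Γ.dist γ δ := tri _ _ _
    have h4 : Γ.dist γ δ ≤ 1 := hadj_le _ _ hadj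
    have hlb : Γ.dist α δ ≤ Γ.dist α (β m) + Γ.dist (β m) δ := tri _ _ _
    have := hd1 m
    omega
  -- each δ ∈ Δ at distance s from β m has a neighbour in B_m
  have h4 : ∀ δ ∈ Δ, ∀ m : Fin k, Γ.dist (β m) δ = s →
      ∃ γ : V, Γ.Adj δ γ ∧ Γ.dist α γ = s ∧ Γ.dist (β m) γ = s - 1 := by
    intro δ hδ m hm
    have hδd : Γ.dist α δ = s + 1 := hΔsub hδ
    obtain ⟨r, hr, hrlen⟩ := hconn.exists_path_of_dist δ (β m)
    rw [SimpleGraph.dist_comm, hm] at hrlen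
    cases r with
    | nil => simp at hrlen; omega
    | cons hadj r' =>
      rename_i γ
      refine ⟨γ, hadj, ?_, ?_⟩
      · have hr'le : Γ.dist γ (β m) ≤ s - 1 := by
          have := SimpleGraph.dist_le r'
          rw [Walk.length_cons] at hrlen
          omega
        have hub : Γ.dist α γ ≤ Γ.dist α (β m) + Γ.dist (β m) γ := tri _ _ _
        have hub2 : Γ.dist (β m) γ ≤ s - 1 := by
          rw [SimpleGraph.dist_comm]; exact hr'le
        have hlb : Γ.dist α δ ≤ Γ.dist α γ + Γ.dist γ δ := tri _ _ _
        have hγδ : Γ.dist γ δ ≤ 1 := hadj_le _ _ hadj.symm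
        have := hd1 m
        omega
      · have hr'le : Γ.dist γ (β m) ≤ s - 1 := by
          have := SimpleGraph.dist_le r'
          rw [Walk.length_cons] at hrlen
          omega
        have hub2 : Γ.dist (β m) γ ≤ s - 1 := by
          rw [SimpleGraph.dist_comm]; exact hr'le
        have hlb : Γ.dist (β m) δ ≤ Γ.dist (β m) γ + Γ.dist γ δ := tri _ _ _
        have hγδ : Γ.dist γ δ ≤ 1 := hadj_le _ _ hadj.symm
        omega
  have hk0 : 0 < k := by omega
  -- the branch function
  obtain ⟨brn, hbrn1⟩ : ∃ f : V → Fin k, ∀ γ : V, Γ.dist α γ = s →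
      Γ.dist (β (f γ)) γ = s - 1 := by
    refine ⟨fun γ => if h : ∃ m : Fin k, Γ.dist (β m) γ = s - 1 then h.choose
      else ⟨0, hk0⟩, ?_⟩
    intro γ hγ
    have hex := h1 γ hγ
    simp only [dif_pos hex]
    exact hex.choose_spec
  have hbrn2 : ∀ γ : V, Γ.dist α γ = s → ∀ m : Fin k, Γ.dist (β m) γ = s - 1 →
      brn γ = m := fun γ hγ m hm => h2 γ hγ _ m (hbrn1 γ hγ) hm
  -- the set of branches reaching δ
  set Sd : V → Finset (Fin k) :=
    fun δ => Finset.univ.filter fun m => Γ.dist (β m) δ = s with hSddef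
  have hmemSd : ∀ (δ : V) (m : Fin k), m ∈ Sd δ ↔ Γ.dist (β m) δ = s := by
    intro δ m; simp [hSddef]
  -- key counting block
  have hkey : ∀ δ ∈ Δ, (Sd δ).card ≤ c' ∧ ((Sd δ).card = c' → ∀ m : Fin k,
      Γ.dist (β m) δ = s → (Γ.neighborSet δ ∩ BJ Γ α s (β m)).ncard = 1) := by
    intro δ hδ
    set N' : Finset V := Finset.univ.filter fun w => Γ.Adj δ w ∧ Γ.dist α w = s
      with hN'def
    have hmemN' : ∀ w : V, w ∈ N' ↔ Γ.Adj δ w ∧ Γ.dist α w = s := by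
      intro w; simp [hN'def]
    have hN'c : N'.card = c' := by
      have hset : (Γ.neighborSet δ ∩ {w | Γ.dist α w = s}) = ↑N' := by
        ext w
        simp [hmemN' w, SimpleGraph.mem_neighborSet]
      have := hc' δ hδ
      rwa [hset, Set.ncard_coe_finset] at this
    have hmaps : ∀ w ∈ N', brn w ∈ Sd δ := by
      intro w hw
      rw [hmemN'] at hw
      rw [hmemSd]
      exact h3 w δ hw.2 hw.1.symm hδ (brn w) (hbrn1 w hw.2)
    have hsum : N'.card = ∑ m' ∈ Sd δ, (N'.filter fun w => brn w = m').card :=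
      Finset.card_eq_sum_card_fiberwise hmaps
    have hfone : ∀ m' ∈ Sd δ, 1 ≤ (N'.filter fun w => brn w = m').card := by
      intro m' hm'
      rw [hmemSd] at hm'
      obtain ⟨γ, hγadj, hγd, hγm⟩ := h4 δ hδ m' hm'
      refine Finset.card_pos.mpr ⟨γ, ?_⟩
      rw [Finset.mem_filter]
      exact ⟨(hmemN' γ).mpr ⟨hγadj, hγd⟩, hbrn2 γ hγd m' hγm⟩
    have hones : ∑ _m' ∈ Sd δ, 1 = (Sd δ).card := (Finset.card_eq_sum_ones _).symm
    have hle : (Sd δ).card ≤ c' := by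
      have : ∑ _m' ∈ Sd δ, 1 ≤ ∑ m' ∈ Sd δ, (N'.filter fun w => brn w = m').card :=
        Finset.sum_le_sum hfone
      omega
    refine ⟨hle, ?_⟩
    intro hcard m hm
    have heach : (N'.filter fun w => brn w = m).card = 1 := by
      by_contra hne0
      have hmS : m ∈ Sd δ := (hmemSd δ m).mpr hm
      have hlt : ∑ _m' ∈ Sd δ, 1 < ∑ m' ∈ Sd δ, (N'.filter fun w => brn w = m').card := by
        refine Finset.sum_lt_sum hfone ⟨m, hmS, ?_⟩
        have := hfone m hmS
        omega
      omega
    have hsetfib : Γ.neighborSet δ ∩ BJ Γ α s (β m) = ↑(N'.filter fun w => brn w = m) := by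
      ext w
      simp only [Finset.coe_filter, Set.mem_setOf_eq, hmemN', Set.mem_inter_iff,
        SimpleGraph.mem_neighborSet, BJ]
      constructor
      · rintro ⟨hadj, hds, hdm⟩
        exact ⟨⟨hadj, hds⟩, hbrn2 w hds m hdm⟩
      · rintro ⟨⟨hadj, hds⟩, hbw⟩
        refine ⟨hadj, hds, ?_⟩
        rw [← hbw]
        exact hbrn1 w hds
    rw [hsetfib, Set.ncard_coe_finset, heach]
  -- the number of branches is constant on the orbit Δ
  have hmono : ∀ g : Equiv.Perm V, g ∈ G → g α = α → ∀ δ : V,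
      (Sd δ).card ≤ (Sd (g δ)).card := by
    intro g hg hgα0 δ
    have hdist : ∀ u v : V, Γ.dist (g u) (g v) = Γ.dist u v := by
      intro u v
      refine le_antisymm (MyAux.perm_dist_le hconn g (hGaut g hg) u v) ?_
      have := MyAux.perm_dist_le hconn g⁻¹ (hGaut g⁻¹ (inv_mem hg)) (g u) (g v)
      simpa using this
    have hβg : ∀ m : Fin k, ∃ m' : Fin k, β m' = g (β m) := by
      intro m
      apply (hβran _).mp
      have h := (hGaut g hg α (β m)).mpr (hadjβ m)
      rwa [hgα0] at h
    choose σg hσg using hβg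
    have hinj : Function.Injective σg := by
      intro m m' he
      apply hβinj
      apply g.injective
      rw [← hσg m, ← hσg m', he]
    have hsub : (Sd δ).image σg ⊆ Sd (g δ) := by
      intro m' hm'
      obtain ⟨m, hm, rfl⟩ := Finset.mem_image.mp hm'
      rw [hmemSd] at hm ⊢
      rw [hσg m, hdist]
      exact hm
    calc (Sd δ).card = ((Sd δ).image σg).card :=
          (Finset.card_image_of_injective _ hinj).symm
      _ ≤ (Sd (g δ)).card := Finset.card_le_card hsub
  obtain ⟨δ₀, hδ₀, hΔeq⟩ := hΔorb
  have hconst : ∀ δ ∈ Δ, ∀ δ' ∈ Δ, (Sd δ).card = (Sd δ').card := by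
    intro δ hδ δ' hδ'
    have hδ1 := hδ
    have hδ'1 := hδ'
    rw [hΔeq] at hδ1 hδ'1
    obtain ⟨g₁, hg₁, hg₁α, hg₁δ⟩ := hδ1
    obtain ⟨g₂, hg₂, hg₂α, hg₂δ⟩ := hδ'1
    have hginvα : ∀ g : Equiv.Perm V, g α = α → g⁻¹ α = α := by
      intro g hgα0
      conv_lhs => rw [← hgα0]
      exact g.symm_apply_apply α
    have key : ∀ (ga gb : Equiv.Perm V), ga ∈ G → gb ∈ G → ga α = α → gb α = α →
        ∀ x y : V, ga δ₀ = x → gb δ₀ = y → (Sd x).card ≤ (Sd y).card := by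
      intro ga gb hga hgb hgaα hgbα x y hgax hgby
      have h := hmono (gb * ga⁻¹) (mul_mem hgb (inv_mem hga)) (by
        rw [Equiv.Perm.mul_apply, hginvα ga hgaα, hgbα]) x
      have he : (gb * ga⁻¹) x = y := by
        rw [Equiv.Perm.mul_apply, ← hgax, Equiv.Perm.inv_def, Equiv.symm_apply_apply, hgby]
      rwa [he] at h
    exact le_antisymm (key g₁ g₂ hg₁ hg₂ hg₁α hg₂α δ δ' hg₁δ hg₂δ)
      (key g₂ g₁ hg₂ hg₁ hg₂α hg₁α δ' δ hg₂δ hg₁δ)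
  -- membership lemmas
  have hDJ : ∀ (b : V) (x : V), x ∈ DeltaJ Γ s Δ b ↔ x ∈ Δ ∧ Γ.dist b x = s := by
    intro b x; simp [DeltaJ]
  have hmemDeltaS : ∀ (T : Finset (Fin k)) (δ : V),
      δ ∈ DeltaS Γ s Δ β T ↔ ∀ m ∈ T, δ ∈ Δ ∧ Γ.dist (β m) δ = s := by
    intro T δ; simp [DeltaS, DeltaJ]
  have hmemBJ : ∀ (b : V) (x : V),
      x ∈ BJ Γ α s b ↔ Γ.dist α x = s ∧ Γ.dist b x = s - 1 := by
    intro b x; simp [BJ]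
  have hmemBJS : ∀ (T : Finset (Fin k)) (x : V),
      x ∈ BJS Γ α s Δ β j T ↔
        ∃ δ : V, δ ∈ DeltaS Γ s Δ β T ∧ x ∈ BJ Γ α s (β j) ∧ Γ.Adj δ x := by
    intro T x
    simp only [BJS, Set.mem_iUnion, Set.mem_inter_iff, SimpleGraph.mem_neighborSet]
    constructor
    · rintro ⟨δ, hδ, hx1, hx2⟩; exact ⟨δ, hδ, hx1, hx2⟩
    · rintro ⟨δ, hδ, hx1, hx2⟩; exact ⟨δ, hδ, hx1, hx2⟩
  -- pin down the cardinality using S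
  obtain ⟨δ₁, hδ₁S⟩ := Set.nonempty_iff_ne_empty.mpr hSne
  have hδ₁facts := (hmemDeltaS S δ₁).mp hδ₁S
  have hδ₁Δ : δ₁ ∈ Δ := (hδ₁facts j hjS).1
  have hSsub : S ⊆ Sd δ₁ := fun m hm => (hmemSd δ₁ m).mpr (hδ₁facts m hm).2
  have hcard₁ : (Sd δ₁).card = c' :=
    le_antisymm (hkey δ₁ hδ₁Δ).1 (hScard ▸ Finset.card_le_card hSsub)
  have hallcard : ∀ δ ∈ Δ, (Sd δ).card = c' := fun δ hδ =>
    (hconst δ hδ δ₁ hδ₁Δ).trans hcard₁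
  have hone : ∀ δ ∈ Δ, ∀ m : Fin k, Γ.dist (β m) δ = s →
      (Γ.neighborSet δ ∩ BJ Γ α s (β m)).ncard = 1 :=
    fun δ hδ => (hkey δ hδ).2 (hallcard δ hδ)
  have hTeq : ∀ δ ∈ Δ, ∀ T : Finset (Fin k), T.card = c' →
      (∀ m ∈ T, Γ.dist (β m) δ = s) → T = Sd δ := by
    intro δ hδ T hTc hTm
    apply Finset.eq_of_subset_of_card_le (fun m hm => (hmemSd δ m).mpr (hTm m hm))
    rw [hallcard δ hδ, hTc]
  have hbsingle : ∀ γ : V, Γ.dist α γ = s → ∃ δ : V, Γ.neighborSet γ ∩ Δ = {δ} :=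
    fun γ hγ => Set.ncard_eq_one.mp (hb1 γ hγ)
  have hSdmem : ∀ δ ∈ Δ, δ ∈ DeltaS Γ s Δ β (Sd δ) := by
    intro δ hδ
    exact (hmemDeltaS _ δ).mpr (fun m hm => ⟨hδ, (hmemSd δ m).mp hm⟩)
  refine ⟨⟨?_, ?_⟩, ⟨?_, ?_⟩, ⟨?_, ?_⟩, ⟨?_, ?_⟩⟩
  -- (i) a
  · intro γ hγ
    have hγmem := (hmemBJ _ γ).mp hγ
    obtain ⟨δ, hδeq⟩ := hbsingle γ hγmem.1
    have hδmem : δ ∈ Γ.neighborSet γ ∩ Δ := by rw [hδeq]; rfl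
    have heq : Γ.neighborSet γ ∩ DeltaJ Γ s Δ (β j) = {δ} := by
      apply Set.Subset.antisymm
      · intro x hx
        rw [← hδeq]
        exact ⟨hx.1, ((hDJ _ x).mp hx.2).1⟩
      · intro x hx
        rw [Set.mem_singleton_iff] at hx
        subst hx
        exact ⟨hδmem.1, (hDJ _ x).mpr ⟨hδmem.2,
          h3 γ x hγmem.1 hδmem.1 hδmem.2 j hγmem.2⟩⟩
    rw [heq, Set.ncard_singleton]
  -- (i) b
  · intro δ hδ
    have h := (hDJ _ δ).mp hδ
    exact hone δ h.1 j h.2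
  -- (ii) a
  · intro γ hγ
    obtain ⟨δ', hδ'S, hγBJ, hδ'adj⟩ := (hmemBJS S γ).mp hγ
    have hγmem := (hmemBJ _ γ).mp hγBJ
    obtain ⟨δ, hδeq⟩ := hbsingle γ hγmem.1
    have hδ'Δ : δ' ∈ Δ := ((hmemDeltaS S δ').mp hδ'S j hjS).1
    have hδ'δ : δ' = δ := by
      have hx : δ' ∈ Γ.neighborSet γ ∩ Δ := ⟨hδ'adj.symm, hδ'Δ⟩
      rw [hδeq] at hx
      exact hx
    have heq : Γ.neighborSet γ ∩ DeltaS Γ s Δ β S = {δ} := by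
      apply Set.Subset.antisymm
      · intro x hx
        rw [← hδeq]
        exact ⟨hx.1, ((hmemDeltaS S x).mp hx.2 j hjS).1⟩
      · intro x hx
        rw [Set.mem_singleton_iff] at hx
        subst hx
        rw [← hδ'δ]
        exact ⟨hδ'adj.symm, hδ'S⟩
    rw [heq, Set.ncard_singleton]
  -- (ii) b
  · intro δ hδS
    have hδfacts := (hmemDeltaS S δ).mp hδS
    have hδΔ : δ ∈ Δ := (hδfacts j hjS).1
    have hδj : Γ.dist (β j) δ = s := (hδfacts j hjS).2
    obtain ⟨γ, hγeq⟩ := Set.ncard_eq_one.mp (hone δ hδΔ j hδj)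
    have hγmem : γ ∈ Γ.neighborSet δ ∩ BJ Γ α s (β j) := by rw [hγeq]; rfl
    have heq : Γ.neighborSet δ ∩ BJS Γ α s Δ β j S = {γ} := by
      apply Set.Subset.antisymm
      · intro x hx
        obtain ⟨hxadj, hxBJS⟩ := hx
        obtain ⟨δ'', hδ''S, hxBJ, hδ''adj⟩ := (hmemBJS S x).mp hxBJS
        have hx2 : x ∈ Γ.neighborSet δ ∩ BJ Γ α s (β j) := ⟨hxadj, hxBJ⟩
        rw [hγeq] at hx2
        exact hx2
      · intro x hx
        rw [Set.mem_singleton_iff] at hx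
        subst hx
        refine ⟨hγmem.1, (hmemBJS S x).mpr ⟨δ, hδS, hγmem.2, hγmem.1⟩⟩
    rw [heq, Set.ncard_singleton]
  -- (iii) union
  · apply Set.Subset.antisymm
    · intro x hx
      rw [Set.mem_iUnion₂] at hx
      obtain ⟨T, hT, hxT⟩ := hx
      obtain ⟨δ', hδ'S, hxBJ, -⟩ := (hmemBJS T x).mp hxT
      exact hxBJ
    · intro γ hγ
      have hγmem := (hmemBJ _ γ).mp hγ
      obtain ⟨δ, hδeq⟩ := hbsingle γ hγmem.1
      have hδmem : δ ∈ Γ.neighborSet γ ∩ Δ := by rw [hδeq]; rfl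
      have hδΔ : δ ∈ Δ := hδmem.2
      have hδj : Γ.dist (β j) δ = s := h3 γ δ hγmem.1 hδmem.1 hδΔ j hγmem.2
      have hjSd : j ∈ Sd δ := (hmemSd δ j).mpr hδj
      have hδinS : δ ∈ DeltaS Γ s Δ β (Sd δ) := hSdmem δ hδΔ
      have hTB : Sd δ ∈ Blocks Γ s Δ β c' :=
        ⟨hallcard δ hδΔ, Set.nonempty_iff_ne_empty.mp ⟨δ, hδinS⟩⟩
      refine Set.mem_iUnion₂.mpr ⟨Sd δ, ⟨hTB, hjSd⟩, ?_⟩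
      exact (hmemBJS _ γ).mpr ⟨δ, hδinS, hγ, hδmem.1.symm⟩
  -- (iii) disjoint
  · intro T₁ hT₁ T₂ hT₂ hne12
    apply Set.eq_empty_iff_forall_notMem.mpr
    intro x hx
    obtain ⟨hx1, hx2⟩ := hx
    obtain ⟨δ₁', hδ₁'S, hxBJ, hδ₁'adj⟩ := (hmemBJS T₁ x).mp hx1
    obtain ⟨δ₂', hδ₂'S, -, hδ₂'adj⟩ := (hmemBJS T₂ x).mp hx2
    have hxd : Γ.dist α x = s := ((hmemBJ _ x).mp hxBJ).1
    obtain ⟨δ, hδeq⟩ := hbsingle x hxd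
    have hT₁Δ : δ₁' ∈ Δ := ((hmemDeltaS T₁ δ₁').mp hδ₁'S j hT₁.2).1
    have hT₂Δ : δ₂' ∈ Δ := ((hmemDeltaS T₂ δ₂').mp hδ₂'S j hT₂.2).1
    have e₁ : δ₁' = δ := by
      have hmem : δ₁' ∈ Γ.neighborSet x ∩ Δ := ⟨hδ₁'adj.symm, hT₁Δ⟩
      rw [hδeq] at hmem
      exact hmem
    have e₂ : δ₂' = δ := by
      have hmem : δ₂' ∈ Γ.neighborSet x ∩ Δ := ⟨hδ₂'adj.symm, hT₂Δ⟩
      rw [hδeq] at hmem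
      exact hmem
    have hδΔ : δ ∈ Δ := e₁ ▸ hT₁Δ
    have hT₁eq : T₁ = Sd δ := by
      refine hTeq δ hδΔ T₁ hT₁.1.1 ?_
      intro m hm
      have := ((hmemDeltaS T₁ δ₁').mp hδ₁'S m hm).2
      rwa [e₁] at this
    have hT₂eq : T₂ = Sd δ := by
      refine hTeq δ hδΔ T₂ hT₂.1.1 ?_
      intro m hm
      have := ((hmemDeltaS T₂ δ₂').mp hδ₂'S m hm).2
      rwa [e₂] at this
    exact hne12 (hT₁eq.trans hT₂eq.symm)
  -- (iv) union
  · apply Set.Subset.antisymm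
    · intro x hx
      rw [Set.mem_iUnion₂] at hx
      obtain ⟨T, hT, hxT⟩ := hx
      have h := (hmemDeltaS T x).mp hxT j hT.2
      exact (hDJ _ x).mpr ⟨h.1, h.2⟩
    · intro δ hδ
      have h := (hDJ _ δ).mp hδ
      have hjSd : j ∈ Sd δ := (hmemSd δ j).mpr h.2
      have hδinS : δ ∈ DeltaS Γ s Δ β (Sd δ) := hSdmem δ h.1
      have hTB : Sd δ ∈ Blocks Γ s Δ β c' :=
        ⟨hallcard δ h.1, Set.nonempty_iff_ne_empty.mp ⟨δ, hδinS⟩⟩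
      exact Set.mem_iUnion₂.mpr ⟨Sd δ, ⟨hTB, hjSd⟩, hδinS⟩
  -- (iv) disjoint
  · intro T₁ hT₁ T₂ hT₂ hne12
    apply Set.eq_empty_iff_forall_notMem.mpr
    intro δ hδ
    have hδΔ : δ ∈ Δ := ((hmemDeltaS T₁ δ).mp hδ.1 j hT₁.2).1
    have e₁ : T₁ = Sd δ :=
      hTeq δ hδΔ T₁ hT₁.1.1 (fun m hm => ((hmemDeltaS T₁ δ).mp hδ.1 m hm).2)
    have e₂ : T₂ = Sd δ :=
      hTeq δ hδΔ T₂ hT₂.1.1 (fun m hm => ((hmemDeltaS T₂ δ).mp hδ.2 m hm).2)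
    exact hne12 (e₁.trans e₂.symm)
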